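/- Let n ≥ 2 and let a_1, …, a_n be integers with a_i ≥ 2, and let w = Σ_{i=1}^{n−1} x_i^{a_i} x_{i+1} + x_n^{a_n} x_1 ∈ ℂ[x_1, …, x_n] be the loop polynomial. Then the group G_w = { γ ∈ (ℂ^×)^n : w(γ_1 x_1, …, γ_n x_n) = w(x_1, …, x_n) } of diagonal symmetries of w (equivalently, the set of γ with γ_i^{a_i} γ_{i+1} = 1 for 1 ≤ i ≤ n−1 and γ_n^{a_n} γ_1 = 1) is finite of cardinality ∏_{j=1}^{n} a_j + (−1)^{n+1}. -/

import Mathlib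

open MvPolynomial
open Fin.NatCast

private def loopExp (a : ℕ → ℕ) (k : ℕ) : ℤ :=
  (-1) ^ k * ∏ j ∈ Finset.range k, (a j : ℤ)

private lemma loopExp_zero (a : ℕ → ℕ) : loopExp a 0 = 1 := by simp [loopExp]

private lemma loopExp_succ (a : ℕ → ℕ) (k : ℕ) :
    loopExp a (k + 1) = -(a k : ℤ) * loopExp a k := by
  simp only [loopExp, Finset.prod_range_succ, pow_succ]
  ring

/-- The group of diagonal symmetries of the loop polynomial
`w = ∑_{i=1}^{n−1} x_i^{a_i} x_{i+1} + x_n^{a_n} x_1` (equivalently, the set of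
`γ ∈ (ℂ^×)^n` with `γ_i^{a_i} γ_{i+1} = 1` cyclically) is finite of cardinality
`∏_{j=1}^{n} a_j + (−1)^{n+1}`. Indices are `0`-based via `Fin n`, with cyclic
successor `i + 1` in `Fin n`. -/
theorem loop_diagonal_symmetry_group_card {n : ℕ} [NeZero n] (hn : 2 ≤ n)
    (a : ℕ → ℕ) (ha : ∀ i < n, 2 ≤ a i)
    (w : MvPolynomial (Fin n) ℂ)
    (hw : w = ∑ i : Fin n, X i ^ a (i : ℕ) * X (i + 1))
    (G : Set (Fin n → ℂˣ))
    (hG : G = {γ | MvPolynomial.aeval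
        (fun i => MvPolynomial.C ((γ i : ℂ)) * X i) w = w}) :
    G = {γ | ∀ i : Fin n, γ i ^ a (i : ℕ) * γ (i + 1) = 1} ∧
      G.Finite ∧
      (G.ncard : ℤ) = (∏ j ∈ Finset.range n, (a j : ℤ)) + (-1) ^ (n + 1) := by
  classical
  -- basic facts about `Fin n`
  have h1 : (1 : Fin n) ≠ 0 := by
    intro h
    have := congrArg Fin.val h
    rw [Fin.val_one', Nat.mod_eq_of_lt hn, Fin.val_zero] at this
    exact one_ne_zero this
  have hsucc : ∀ i : Fin n, i + 1 ≠ i := by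
    intro i h
    exact h1 (add_eq_left.mp h)
  -- the exponent vectors of the monomials of `w`
  set d : Fin n → (Fin n →₀ ℕ) :=
    fun i => Finsupp.single i (a (i : ℕ)) + Finsupp.single (i + 1) 1 with hd
  have hd_self : ∀ i, d i i = a (i : ℕ) := by
    intro i
    simp [hd, Finsupp.single_apply, hsucc i]
  have hdinj : Function.Injective d := by
    intro i j h
    by_contra hij
    have h2 := DFunLike.congr_fun h i
    rw [hd_self i] at h2
    have hji : j ≠ i := fun h' => hij (h'.symm ▸ rfl)
    simp only [hd, Finsupp.add_apply, Finsupp.single_apply, if_neg hji] at h2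
    have hai := ha (i : ℕ) i.isLt
    by_cases hc : j + 1 = i <;> simp [hc] at h2 <;> omega
  have hmon : ∀ i : Fin n,
      (X i ^ a (i : ℕ) * X (i + 1) : MvPolynomial (Fin n) ℂ) = monomial (d i) 1 := by
    intro i
    rw [← pow_one (X (i + 1) : MvPolynomial (Fin n) ℂ), X_pow_eq_monomial,
      X_pow_eq_monomial, monomial_mul, one_mul]
  -- Step 1: identification of `G` with the explicit set
  have hGS : G = {γ | ∀ i : Fin n, γ i ^ a (i : ℕ) * γ (i + 1) = 1} := by
    rw [hG, hw]
    ext γ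
    simp only [Set.mem_setOf_eq, map_sum]
    have hlhs : ∀ i : Fin n,
        (MvPolynomial.aeval (fun i : Fin n =>
            (MvPolynomial.C ((γ i : ℂ)) * X i : MvPolynomial (Fin n) ℂ)))
          ((X i ^ a (i : ℕ) * X (i + 1) : MvPolynomial (Fin n) ℂ)) =
        monomial (d i) ((γ i : ℂ) ^ a (i : ℕ) * (γ (i + 1) : ℂ)) := by
      intro i
      rw [map_mul, map_pow, aeval_X, aeval_X, mul_pow, ← C_pow,
        mul_mul_mul_comm, ← C_mul, hmon i, C_mul_monomial, mul_one]
    rw [Finset.sum_congr rfl (fun i _ => hlhs i),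
      Finset.sum_congr rfl (fun i _ => hmon i)]
    constructor
    · intro h i
      have hc := congrArg (coeff (d i)) h
      rw [coeff_sum, coeff_sum] at hc
      simp only [coeff_monomial, hdinj.eq_iff] at hc
      rw [Finset.sum_ite_eq', Finset.sum_ite_eq'] at hc
      simp only [Finset.mem_univ, if_true] at hc
      exact Units.ext (by push_cast; exact hc)
    · intro h
      refine Finset.sum_congr rfl fun i _ => ?_
      have := congrArg (Units.val) (h i)
      push_cast at this
      rw [this]
  refine ⟨hGS, ?_⟩
  -- Step 2: the count
  set e : ℕ → ℤ := loopExp a with he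
  set P : ℤ := ∏ j ∈ Finset.range n, (a j : ℤ) with hP
  set M : ℤ := P + (-1) ^ (n + 1) with hMdef
  have hsq : ((-1 : ℤ) ^ n) * ((-1 : ℤ) ^ n) = 1 := by
    rw [← mul_pow]; norm_num
  have hM : ((-1 : ℤ) ^ n) * (e n - 1) = M := by
    have hen : e n = (-1) ^ n * P := rfl
    rw [hen, hMdef, pow_succ]
    linear_combination P * hsq
  have hPbig : (4 : ℤ) ≤ P := by
    have h2n : (2 : ℤ) ^ n ≤ P := by
      calc (2 : ℤ) ^ n = ∏ _j ∈ Finset.range n, (2 : ℤ) := by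
            rw [Finset.prod_const, Finset.card_range]
        _ ≤ P := by
            rw [hP]
            refine Finset.prod_le_prod (fun i _ => by norm_num) (fun i hi => ?_)
            exact_mod_cast ha i (Finset.mem_range.mp hi)
    calc (4 : ℤ) = 2 ^ 2 := by norm_num
    _ ≤ 2 ^ n := pow_le_pow_right₀ (by norm_num) hn
    _ ≤ P := h2n
  have hsign : ((-1 : ℤ) ^ (n + 1) = 1) ∨ ((-1 : ℤ) ^ (n + 1) = -1) := by
    rcases Nat.even_or_odd (n + 1) with h | h
    · exact Or.inl h.neg_one_pow
    · exact Or.inr h.neg_one_pow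
  have hMpos : 0 < M := by rcases hsign with h | h <;> rw [hMdef, h] <;> omega
  set N : ℕ := M.toNat with hNdef
  have hN : (N : ℤ) = M := Int.toNat_of_nonneg hMpos.le
  haveI : NeZero N := ⟨by omega⟩
  -- the formula for elements of the set
  have hform : ∀ γ : Fin n → ℂˣ, (∀ i : Fin n, γ i ^ a (i : ℕ) * γ (i + 1) = 1) →
      ∀ k, k ≤ n → γ (k : Fin n) = γ 0 ^ e k := by
    intro γ hγ k
    induction k with
    | zero => intro _; simp [he, loopExp_zero]
    | succ k ih =>
      intro hk
      have hkn : k < n := hk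
      have hik := ih hkn.le
      have h := hγ (k : Fin n)
      have hval : (((k : Fin n)) : ℕ) = k := by
        rw [Fin.val_natCast, Nat.mod_eq_of_lt hkn]
      rw [hval, hik] at h
      have h2 : γ ((k : Fin n) + 1) = ((γ 0 ^ e k) ^ a k)⁻¹ :=
        eq_inv_of_mul_eq_one_left (by rw [mul_comm]; exact h)
      have hcast : ((k + 1 : ℕ) : Fin n) = (k : Fin n) + 1 := by push_cast; ring
      rw [hcast, h2, ← zpow_natCast, ← zpow_mul, ← zpow_neg, he, loopExp_succ]
      congr 1
      ring
  have hroot : ∀ γ : Fin n → ℂˣ, (∀ i : Fin n, γ i ^ a (i : ℕ) * γ (i + 1) = 1) →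
      γ 0 ^ N = 1 := by
    intro γ hγ
    have h := hform γ hγ n le_rfl
    rw [Fin.natCast_self] at h
    have h2 : γ 0 ^ (e n - 1) = 1 := by
      rw [zpow_sub, zpow_one, ← h]
      simp
    have h3 : γ 0 ^ M = 1 := by
      rw [← hM, mul_comm, zpow_mul, h2, one_zpow]
    rw [← zpow_natCast, hN, h3]
  -- the inverse construction
  have hmem : ∀ ζ : ℂˣ, ζ ^ N = 1 →
      ∀ i : Fin n, (fun i : Fin n => ζ ^ e (i : ℕ)) i ^ a (i : ℕ) *
        (fun i : Fin n => ζ ^ e (i : ℕ)) (i + 1) = 1 := by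
    intro ζ hζ i
    have hζM : ζ ^ M = 1 := by rw [← hN, zpow_natCast, hζ]
    simp only
    rw [← zpow_natCast, ← zpow_mul, ← zpow_add]
    have he0 : e 0 = 1 := by rw [he]; exact loopExp_zero a
    have hes : ∀ k, e (k + 1) = -(a k : ℤ) * e k := by
      intro k; rw [he]; exact loopExp_succ a k
    have hcast : i + 1 = ((((i : ℕ) + 1 : ℕ)) : Fin n) := by
      push_cast [Fin.cast_val_eq_self]; ring
    by_cases hlt : (i : ℕ) + 1 < n
    · have hv : Fin.val (i + 1) = (i : ℕ) + 1 := by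
        rw [hcast, Fin.val_natCast, Nat.mod_eq_of_lt hlt]
      rw [hv, hes]
      rw [show e (i : ℕ) * (a (i : ℕ) : ℤ) + -(a (i : ℕ) : ℤ) * e (i : ℕ) = 0 by ring,
        zpow_zero]
    · have hin : (i : ℕ) + 1 = n := by have := i.isLt; omega
      have hv : Fin.val (i + 1) = 0 := by
        rw [hcast, hin, Fin.natCast_self, Fin.val_zero]
      have hen1 : e n - 1 = (-1 : ℤ) ^ n * M := by
        rw [← hM, show ((-1:ℤ)^n * (((-1:ℤ)^n) * (e n - 1))) =
          ((-1:ℤ)^n * ((-1:ℤ)^n)) * (e n - 1) by ring, hsq, one_mul]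
      have h6 := hes (i : ℕ)
      rw [hin] at h6
      have hexp : e (i : ℕ) * (a (i : ℕ) : ℤ) + e 0 = (-(-1 : ℤ) ^ n) * M := by
        rw [he0]
        linear_combination h6 - hen1
      rw [hv, hexp, mul_comm, zpow_mul, hζM, one_zpow]
  -- the bijection with N-th roots of unity
  set S : Set (Fin n → ℂˣ) := {γ | ∀ i : Fin n, γ i ^ a (i : ℕ) * γ (i + 1) = 1} with hS
  have hinj : ∀ γ ∈ S, ∀ γ' ∈ S, γ 0 = γ' 0 → γ = γ' := by
    intro γ hγ γ' hγ' h0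
    funext i
    rw [← Fin.cast_val_eq_self i, hform γ hγ (i : ℕ) i.isLt.le,
      hform γ' hγ' (i : ℕ) i.isLt.le, h0]
  have hmemS : ∀ ζ : ℂˣ, ζ ^ N = 1 → (fun i : Fin n => ζ ^ e (i : ℕ)) ∈ S := by
    intro ζ hζ
    exact hmem ζ hζ
  have hzero : ∀ ζ : ℂˣ, (fun i : Fin n => ζ ^ e (i : ℕ)) 0 = ζ := by
    intro ζ
    simp only [Fin.val_zero, he, loopExp_zero, zpow_one]
  let E : S ≃ rootsOfUnity N ℂ :=
    { toFun := fun γ => ⟨γ.1 0, (mem_rootsOfUnity N _).mpr (hroot γ.1 γ.2)⟩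
      invFun := fun ζ => ⟨fun i : Fin n => ζ.1 ^ e (i : ℕ),
        hmemS ζ.1 ((mem_rootsOfUnity N _).mp ζ.2)⟩
      left_inv := by
        intro γ
        refine Subtype.ext (hinj _ (hmemS _ (hroot γ.1 γ.2)) _ γ.2 ?_)
        exact hzero _
      right_inv := by
        intro ζ
        exact Subtype.ext (hzero ζ.1) }
  have hfin : S.Finite := by
    haveI : Finite S := Finite.of_equiv _ E.symm
    exact Set.finite_coe_iff.mp inferInstance
  have hcard : S.ncard = N := by
    rw [← Nat.card_coe_set_eq, Nat.card_congr E,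
      Complex.card_rootsOfUnity]
  constructor
  · rw [hGS]; exact hfin
  · rw [hGS]
    show ((S.ncard : ℤ)) = P + (-1) ^ (n + 1)
    rw [hcard, hN, hMdef]
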